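/- The word x_3 over {0,1,2}, obtained from the characteristic Sturmian word of slope √2 − 1 by replacing the n-th occurrence of 0 by the n-th letter of (01)^ω and each 1 by 2, has critical exponent 2 + √2/2. -/

import Mathlib

/-- Standard words associated to the continued fraction `[0; d 1, d 2, ...]`. -/
def stdWord (d : ℕ → ℕ) : ℕ → List ℕ
  | 0 => [0]
  | 1 => List.replicate (d 1 - 1) 0 ++ [1]
  | (n+2) => (List.replicate (d (n+2)) (stdWord d (n+1))).flatten ++ stdWord d n

/-- Partial quotients of `√2 - 1 = [0; 2, 2, 2, ...]`. -/
def d2 (i : ℕ) : ℕ := if i = 0 then 0 else 2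

/-- The characteristic Sturmian word of slope `[0; d 1, d 2, ...]`
(the limit of the standard words). -/
def charWord (d : ℕ → ℕ) (n : ℕ) : ℕ := (stdWord d (n+1)).getD n 0

/-- `p` is a period of the finite word `w`. -/
def hasPeriod {α : Type*} (w : List α) (p : ℕ) : Prop :=
  0 < p ∧ ∀ i : ℕ, i + p < w.length → w[i]? = w[i + p]?

/-- The finite word `u` occurs in the infinite word `x` at position `i`. -/
def OccursAt (u : List ℕ) (x : ℕ → ℕ) (i : ℕ) : Prop :=
  u = (List.range u.length).map fun j => x (i + j)

/-- `u` is a factor of the infinite word `x`. -/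
def IsFactorI (u : List ℕ) (x : ℕ → ℕ) : Prop :=
  ∃ i : ℕ, OccursAt u x i

/-- Number of occurrences of the letter `a` among `x 0, ..., x (n-1)`. -/
def countBelow (x : ℕ → ℕ) (a n : ℕ) : ℕ :=
  ((Finset.range n).filter fun j => x j = a).card

/-- The set of exponents of nonempty factors of the infinite word `x`. -/
def expSet (x : ℕ → ℕ) : Set ℝ :=
  {e | ∃ (u : List ℕ) (p : ℕ), IsFactorI u x ∧ u ≠ [] ∧ hasPeriod u p ∧
        e = (u.length : ℝ) / p}

/-- The word `x₃`: replace the `n`-th occurrence of `0` in the characteristic Sturmian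
word of slope `√2 - 1` by the `n`-th letter of `(01)^ω`, and each `1` by `2`. -/
def x3 (n : ℕ) : ℕ :=
  if charWord d2 n = 0 then countBelow (charWord d2) 0 n % 2 else 2

namespace CE

noncomputable section

set_option linter.unusedSectionVars false



local notation "√2" => Real.sqrt 2

lemma sqrt2_sq : √2 * √2 = 2 := Real.mul_self_sqrt (by norm_num)
lemma sqrt2_lt : √2 < 1.5 := by nlinarith [sqrt2_sq, Real.sqrt_nonneg 2]
lemma sqrt2_gt : 1.4 < √2 := by nlinarith [sqrt2_sq, Real.sqrt_nonneg 2]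

lemma mul_sqrt2_ne_int {m z : ℤ} (hm : m ≠ 0) : (m : ℝ) * √2 ≠ (z : ℝ) := by
  intro h
  exact (irrational_sqrt_two.intCast_mul hm) ⟨z, h.symm⟩

def B (n : ℕ) : ℤ := ⌊((n : ℝ) + 1) * √2⌋

def X (n : ℕ) : ℝ := ((n : ℝ) + 1) * √2 - B n

lemma X_def (n : ℕ) : (B n : ℝ) = ((n : ℝ) + 1) * √2 - X n := by simp [X]

lemma X_pos (n : ℕ) : 0 < X n := by
  have h1 : (B n : ℝ) ≤ ((n:ℝ)+1) * √2 := Int.floor_le _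
  rcases lt_or_eq_of_le h1 with h | h
  · simp only [X]; linarith
  · exfalso
    have : ((n + 1 : ℤ) : ℝ) * √2 = ((B n : ℤ) : ℝ) := by push_cast; linarith
    exact mul_sqrt2_ne_int (by omega) this

lemma X_lt_one (n : ℕ) : X n < 1 := by
  have := Int.lt_floor_add_one (((n : ℝ) + 1) * √2)
  simp only [X, B] at *; linarith

lemma B_pos (n : ℕ) : 1 ≤ B n := by
  have h : ((1:ℤ):ℝ) ≤ ((n:ℝ)+1) * √2 := by
    push_cast; nlinarith [sqrt2_gt, Nat.cast_nonneg (α := ℝ) n]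
  exact Int.le_floor.mpr h

lemma B_eval {m : ℕ} {z : ℤ} (h1 : (z:ℝ) ≤ ((m:ℝ)+1)*√2) (h2 : ((m:ℝ)+1)*√2 < z+1) :
    B m = z := Int.floor_eq_iff.mpr ⟨h1, by exact_mod_cast h2⟩

/-- the characteristic word of slope √2 - 1 as a Beatty-type sequence -/
def f (n : ℕ) : ℕ := if B (n+1) = B n + 1 then 0 else 1

lemma B_succ (n : ℕ) : B (n+1) = B n + 1 + f n := by
  have hlow : B n + 1 ≤ B (n+1) := by
    apply Int.le_floor.mpr
    push_cast
    nlinarith [X_def n, X_pos n, X_lt_one n, sqrt2_gt, sqrt2_lt]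
  have hhigh : B (n+1) < B n + 3 := by
    apply Int.floor_lt.mpr
    push_cast
    nlinarith [X_def n, X_pos n, X_lt_one n, sqrt2_gt, sqrt2_lt]
  simp only [f]
  split <;> omega

lemma f_le_one (n : ℕ) : f n ≤ 1 := by simp only [f]; split <;> omega

lemma f_eq_one_iff (n : ℕ) : f n = 1 ↔ 2 - √2 ≤ X n := by
  constructor
  · intro h
    have hs := B_succ n
    rw [h] at hs
    push_cast at hs
    have h2 : ((B (n+1) : ℤ) : ℝ) ≤ ((n:ℝ)+1+1) * √2 := by
      simpa [B] using Int.floor_le (((n:ℝ)+1+1) * √2)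
    rw [hs] at h2
    push_cast at h2
    nlinarith [X_def n]
  · intro h
    have h2 : B (n+1) = B n + 2 := by
      apply B_eval <;> push_cast <;> nlinarith [X_def n, X_pos n, X_lt_one n, sqrt2_lt, sqrt2_gt]
    have := B_succ n
    omega

def phi (n : ℕ) : ℕ := n + (B n).toNat - 1

lemma phi_cast (n : ℕ) : ((phi n : ℕ) : ℤ) = n + B n - 1 := by
  have := B_pos n
  simp only [phi]
  omega

lemma phi_zero : phi 0 = 0 := by
  have : B 0 = 1 := by
    apply B_eval <;> push_cast <;> nlinarith [sqrt2_lt, sqrt2_gt]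
  simp [phi, this]

lemma phi_real (n : ℕ) : ((phi n : ℕ) : ℝ) = (n : ℝ) + B n - 1 := by
  exact_mod_cast congrArg (Int.cast : ℤ → ℝ) (phi_cast n)

-- value at phi n + k : B (phi n + k) = 2n + B n + val k, val: 0,1,3,(4)
lemma B_phi (n : ℕ) : B (phi n) = 2 * n + B n := by
  apply B_eval <;>
  · push_cast [phi_real n, X_def n]
    nlinarith [X_pos n, X_lt_one n, sqrt2_lt, sqrt2_gt, sqrt2_sq, Nat.cast_nonneg (α := ℝ) n]

lemma B_phi1 (n : ℕ) : B (phi n + 1) = 2 * n + B n + 1 := by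
  apply B_eval <;>
  · push_cast [phi_real n, X_def n]
    nlinarith [X_pos n, X_lt_one n, sqrt2_lt, sqrt2_gt, sqrt2_sq, Nat.cast_nonneg (α := ℝ) n]

lemma B_phi2 (n : ℕ) : B (phi n + 2) = 2 * n + B n + 3 := by
  apply B_eval <;>
  · push_cast [phi_real n, X_def n]
    nlinarith [X_pos n, X_lt_one n, sqrt2_lt, sqrt2_gt, sqrt2_sq, Nat.cast_nonneg (α := ℝ) n]

lemma B_phi3 (n : ℕ) (h : f n = 1) : B (phi n + 3) = 2 * n + B n + 4 := by
  rw [f_eq_one_iff] at h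
  apply B_eval <;>
  · push_cast [phi_real n, X_def n]
    nlinarith [X_pos n, X_lt_one n, sqrt2_lt, sqrt2_gt, sqrt2_sq, Nat.cast_nonneg (α := ℝ) n, h]

lemma f_phi (n : ℕ) : f (phi n) = 0 := by
  simp only [f, B_phi1 n, B_phi n]; simp

lemma f_phi1 (n : ℕ) : f (phi n + 1) = 1 := by
  have h1 := B_phi1 n
  have h2 := B_phi2 n
  simp only [f]
  rw [show phi n + 1 + 1 = phi n + 2 from rfl, h1, h2]
  split <;> omega

lemma f_phi2 (n : ℕ) (h : f n = 1) : f (phi n + 2) = 0 := by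
  have h2 := B_phi2 n
  have h3 := B_phi3 n h
  simp only [f]
  rw [show phi n + 2 + 1 = phi n + 3 from rfl, h2, h3]
  split <;> omega

lemma phi_succ (n : ℕ) : phi (n + 1) = phi n + 2 + f n := by
  have h1 := phi_cast n
  have h2 := phi_cast (n+1)
  have h3 := B_succ n
  omega



lemma two_step {P : ℕ → Prop} (h0 : P 0) (h1 : P 1)
    (hs : ∀ k, P k → P (k+1) → P (k+2)) : ∀ k, P k := by
  intro k
  induction k using Nat.strong_induction_on with
  | _ k ih =>
    match k with
    | 0 => exact h0
    | 1 => exact h1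
    | (k+2) => exact hs k (ih k (by omega)) (ih (k+1) (by omega))

def sig (a : ℕ) : List ℕ := if a = 0 then [0,1] else [0,1,0]

def sigL (l : List ℕ) : List ℕ := l.flatMap sig

lemma sigL_append (l₁ l₂ : List ℕ) : sigL (l₁ ++ l₂) = sigL l₁ ++ sigL l₂ := by
  simp [sigL]

variable (g : ℕ → ℕ) (ph : ℕ → ℕ)

def fpre (n : ℕ) : List ℕ := (List.range n).map g

lemma fpre_succ (n : ℕ) : fpre g (n+1) = fpre g n ++ [g n] := by
  simp [fpre, List.range_succ]

lemma fpre_getD {n L : ℕ} (h : n < L) : (fpre g L).getD n 0 = g n := by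
  simp [fpre, List.getD, List.getElem?_map, List.getElem?_range, h]

lemma std_two (k : ℕ) :
    stdWord d2 (k+2) = stdWord d2 (k+1) ++ stdWord d2 (k+1) ++ stdWord d2 k := by
  simp [stdWord, d2, List.replicate, List.append_assoc]

lemma std_zero : stdWord d2 0 = [0] := rfl
lemma std_one : stdWord d2 1 = [0, 1] := by simp [stdWord, d2]

section invariance

variable (hf0 : g 0 = 0) (hfle : ∀ n, g n ≤ 1)
  (hphi0 : ph 0 = 0) (hphisucc : ∀ n, ph (n+1) = ph n + 2 + g n)
  (hb0 : ∀ n, g (ph n) = 0) (hb1 : ∀ n, g (ph n + 1) = 1)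
  (hb2 : ∀ n, g n = 1 → g (ph n + 2) = 0)
  (hgrow : ∀ m, 1 ≤ m → m + 1 ≤ ph m)

include hf0 hfle hphi0 hphisucc hb0 hb1 hb2 in
lemma sigL_fpre (n : ℕ) : sigL (fpre g n) = fpre g (ph n) := by
  induction n with
  | zero => simp [fpre, sigL, hphi0]
  | succ n ih =>
    rw [fpre_succ, sigL_append, ih, hphisucc n]
    rcases Nat.le_one_iff_eq_zero_or_eq_one.mp (hfle n) with h | h
    · rw [h]
      have e1 : ph n + 2 + 0 = (ph n + 1) + 1 := by omega
      rw [e1, fpre_succ, fpre_succ, hb1 n, hb0 n]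
      simp [sigL, sig]
    · rw [h]
      have e1 : ph n + 2 + 1 = ((ph n + 1) + 1) + 1 := by omega
      rw [e1, fpre_succ, fpre_succ, fpre_succ, hb2 n h, hb1 n, hb0 n]
      simp [sigL, sig]

include hf0 hfle hphi0 hphisucc hb0 hb1 hb2 in
lemma std_eq_fpre : ∀ k, stdWord d2 k = fpre g (ph^[k] 1) := by
  have hsig : ∀ k, stdWord d2 (k+1) = sigL (stdWord d2 k) := by
    apply two_step
    · rw [std_zero, std_one]; simp [sigL, sig]
    · rw [std_one, std_two, std_zero, std_one]; simp [sigL, sig]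
    · intro k ih1 ih2
      show stdWord d2 (k+1+2) = sigL (stdWord d2 (k+2))
      rw [std_two k, sigL_append, sigL_append, ← ih1, ← ih2, ← std_two (k+1)]
  intro k
  induction k with
  | zero =>
    simp only [Function.iterate_zero, id]
    rw [std_zero]
    have h1 : List.range 1 = [0] := rfl
    simp [fpre, h1, hf0]
  | succ k ih =>
    rw [hsig k, ih, sigL_fpre g ph hf0 hfle hphi0 hphisucc hb0 hb1 hb2,
      Function.iterate_succ_apply']

include hgrow in
lemma iter_ge : ∀ k, k + 1 ≤ ph^[k] 1 := by
  intro k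
  induction k with
  | zero => simp
  | succ k ih =>
    rw [Function.iterate_succ_apply']
    have := hgrow (ph^[k] 1) (by omega)
    omega

include hf0 hfle hphi0 hphisucc hb0 hb1 hb2 hgrow in
lemma charWord_eq_f (n : ℕ) : charWord d2 n = g n := by
  rw [charWord, std_eq_fpre g ph hf0 hfle hphi0 hphisucc hb0 hb1 hb2]
  exact fpre_getD g (by have := iter_ge ph hgrow (n+1); omega)

end invariance



lemma hgrow_phi : ∀ m, 1 ≤ m → m + 1 ≤ phi m := by
  intro m hm
  have hB : 2 ≤ B m := by
    apply Int.le_floor.mpr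
    have : (1:ℝ) ≤ (m:ℝ) := by exact_mod_cast hm
    push_cast
    nlinarith [sqrt2_gt]
  have := B_pos m
  simp only [phi]
  omega

lemma hf0x : f 0 = 0 := by
  have h0 : B 0 = 1 := by
    apply B_eval <;> push_cast <;> nlinarith [sqrt2_lt, sqrt2_gt]
  have h1 : B 1 = 2 := by
    apply B_eval <;> push_cast <;> nlinarith [sqrt2_lt, sqrt2_gt]
  simp [f, h0, h1]

lemma charWord_f (n : ℕ) : charWord d2 n = f n :=
  charWord_eq_f f phi hf0x f_le_one phi_zero phi_succ f_phi f_phi1 f_phi2 hgrow_phi n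

end

end CE

namespace CE
noncomputable section
set_option maxHeartbeats 1000000
lemma countBelow_cast (n : ℕ) : (countBelow (charWord d2) 0 n : ℤ) = 2 * n + 1 - B n := by
  induction n with
  | zero =>
    have h0 : B 0 = 1 := by
      apply B_eval <;> push_cast <;> nlinarith [sqrt2_lt, sqrt2_gt]
    simp [countBelow, h0]
  | succ n ih =>
    have step : countBelow (charWord d2) 0 (n+1) =
        countBelow (charWord d2) 0 n + if charWord d2 n = 0 then 1 else 0 := by
      simp only [countBelow, Finset.range_add_one, Finset.filter_insert]
      split <;> simp [Finset.card_insert_of_notMem, Finset.notMem_range_self]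
    have hBs := B_succ n
    have hcf := charWord_f n
    have hfle := f_le_one n
    rcases Nat.le_one_iff_eq_zero_or_eq_one.mp hfle with h | h <;>
      · rw [step, hcf, h]
        push_cast
        omega

lemma x3_eq (n : ℕ) : x3 n = if f n = 0 then countBelow (charWord d2) 0 n % 2 else 2 := by
  simp [x3, charWord_f]

/-- key letter comparison -/
lemma letter_eq {t t' : ℕ} (h : x3 t = x3 t') :
    f t = f t' ∧ (B t' - B t) % 2 = 0 ∨ (f t = 1 ∧ f t' = 1) := by
  have h1 := countBelow_cast t
  have h2 := countBelow_cast t'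
  have h3 := f_le_one t
  have h4 := f_le_one t'
  rw [x3_eq, x3_eq] at h
  rcases Nat.le_one_iff_eq_zero_or_eq_one.mp h3 with ht | ht <;>
    rcases Nat.le_one_iff_eq_zero_or_eq_one.mp h4 with ht' | ht' <;>
    simp only [ht, ht'] at h ⊢ <;> simp at h ⊢ <;> omega

lemma f_no_11 (n : ℕ) : f n = 0 ∨ f (n+1) = 0 := by
  by_contra hcon
  push_neg at hcon
  obtain ⟨h1, h2⟩ := hcon
  have h1' : f n = 1 := by have := f_le_one n; omega
  have h2' : f (n+1) = 1 := by have := f_le_one (n+1); omega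
  have e1 := B_succ n
  have e2 : B (n+2) = B (n+1) + 1 + f (n+1) := B_succ (n+1)
  rw [h1'] at e1; rw [h2'] at e2
  -- B (n+2) = B n + 4, but (n+3)√2 < B n + 4
  have hup : B (n+2) < B n + 4 := by
    have : ((n:ℝ)+2+1) * √2 < ((B n + 4 : ℤ) : ℝ) := by
      push_cast [X_def n]
      nlinarith [X_pos n, X_lt_one n, sqrt2_lt, sqrt2_gt]
    have := Int.floor_lt.mpr this
    simpa [B] using this
  push_cast at e1 e2
  omega

lemma BX_eval {t : ℕ} {z : ℤ} {y : ℝ} (h : ((t:ℝ)+1) * √2 = z + y)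
    (h0 : 0 < y) (h1 : y < 1) : B t = z ∧ X t = y := by
  have hb : B t = z := by
    apply B_eval
    · rw [h]; linarith
    · rw [h]; push_cast; linarith
  refine ⟨hb, ?_⟩
  have := X_def t
  rw [hb] at this
  linarith

/-- The main upper bound: every factor of `x3` with period `p` has length at most
`(2 + √2/2) * p`. -/
lemma upper_bound {u : List ℕ} {p : ℕ} (hf : IsFactorI u x3) (hper : hasPeriod u p) :
    (u.length : ℝ) ≤ (2 + √2/2) * p := by
  obtain ⟨i, hocc⟩ := hf
  obtain ⟨hp0, hperiod⟩ := hper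
  set L := u.length with hL
  -- x3 values
  have hval : ∀ j, j < L → u[j]? = some (x3 (i + j)) := by
    intro j hj
    rw [hocc]
    simp [List.getElem?_map, List.getElem?_range, hj, (show j < u.length from hj)]
  have hx : ∀ j, j + p < L → x3 (i + j) = x3 (i + j + p) := by
    intro j hj
    have := hperiod j hj
    rw [hval j (by omega), hval (j+p) (by omega)] at this
    have := Option.some.inj this
    rw [this]; ring_nf
  have hp0R : (0:ℝ) < p := by exact_mod_cast hp0
  rcases le_or_gt L (2*p) with hcase | hcase
  · calc (L:ℝ) ≤ 2 * p := by exact_mod_cast hcase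
    _ ≤ (2 + √2/2) * p := by nlinarith [sqrt2_gt]
  -- main case
  have hjump : ∀ j, j + p < L → f (i+j) = f (i+j+p) := by
    intro j hj
    have h := letter_eq (hx j hj)
    rcases h with ⟨h1, _⟩ | ⟨h1, h2⟩ <;> omega
  set D : ℤ := B (i + p) - B i with hD
  have hDconst : ∀ j, j + p ≤ L → B (i + j + p) - B (i + j) = D := by
    intro j
    induction j with
    | zero => intro _; simp [hD]
    | succ j ih =>
      intro hj
      have hih := ih (by omega)
      have e1 := B_succ (i + j)
      have e2 := B_succ (i + j + p)
      have e3 := hjump j (by omega)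
      have : i + (j+1) + p = (i + j + p) + 1 := by ring
      rw [this, show i + (j+1) = (i+j)+1 from by ring]
      omega
  -- evenness
  have hDeven : D % 2 = 0 := by
    have hL2 : 1 + p < L := by omega
    rcases f_no_11 i with h0 | h0
    · have := letter_eq (hx 0 (by omega))
      rcases this with ⟨h1, h2⟩ | ⟨h1, h2⟩
      · have := hDconst 0 (by omega)
        omega
      · rw [show i + 0 = i from rfl] at h1; omega
    · have := letter_eq (hx 1 (by omega))
      rcases this with ⟨h1, h2⟩ | ⟨h1, h2⟩
      · have := hDconst 1 (by omega)
        omega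
      · omega
  -- D bounds
  have hDup : (D:ℝ) < p * √2 + 1 := by
    have e1 := X_def i
    have e2 := X_def (i+p)
    have := X_pos i; have := X_lt_one i
    have := X_pos (i+p); have := X_lt_one (i+p)
    have : (D:ℝ) = p * √2 + X i - X (i+p) := by
      push_cast [hD, e1, e2]; ring
    rw [this]
    linarith [X_lt_one i, X_pos (i+p)]
  have hDlow : (p:ℝ) * √2 - 1 < D := by
    have e1 := X_def i
    have e2 := X_def (i+p)
    have : (D:ℝ) = p * √2 + X i - X (i+p) := by
      push_cast [hD, e1, e2]; ring
    rw [this]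
    linarith [X_pos i, X_lt_one (i+p)]
  have hDne : (D:ℝ) ≠ p * √2 := by
    intro h
    exact mul_sqrt2_ne_int (show (p:ℤ) ≠ 0 by omega) (by push_cast; linarith)
  obtain ⟨c, hc⟩ : ∃ c : ℤ, D = 2 * c := ⟨D / 2, by omega⟩
  have hcpos : 1 ≤ c := by
    have hp1R : (1:ℝ) ≤ p := by exact_mod_cast hp0
    have : (0:ℝ) < D := by nlinarith [hDlow, sqrt2_gt]
    have : 0 < D := by exact_mod_cast this
    omega
  set cn : ℕ := c.toNat with hcn
  have hcnc : (cn : ℤ) = c := Int.toNat_of_nonneg (by omega)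
  -- the shift equation: for t in the window, X (t + p) = X t + (p√2 - D)
  have hshift : ∀ j, j + p ≤ L → X (i + j + p) = X (i + j) + ((p:ℝ) * √2 - D) := by
    intro j hj
    have h := hDconst j hj
    have e1 := X_def (i+j)
    have e2 := X_def (i+j+p)
    have : ((B (i+j+p) : ℤ) : ℝ) = B (i+j) + D := by exact_mod_cast congrArg (Int.cast : ℤ → ℝ) (by omega)
    push_cast [e1, e2] at this
    push_cast
    linarith [this]
  -- final inequality given the key bound L ≤ 2p + cn - 2
  suffices hkey : L + 2 ≤ 2 * p + cn by
    have h2c : (2*c : ℝ) ≤ p * √2 + 1 := by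
      have : (D:ℝ) ≤ p * √2 + 1 := le_of_lt hDup
      rw [hc] at this; push_cast at this; linarith
    have hLR : (L:ℝ) + 2 ≤ 2 * p + cn := by exact_mod_cast hkey
    have : (cn:ℝ) = c := by exact_mod_cast hcnc
    nlinarith [hp0R, sqrt2_gt]
  -- min/max argument
  by_contra hcon
  push_neg at hcon
  have hwin : L - p ≥ p + 1 := by omega
  obtain ⟨j0, hj0mem, hj0opt⟩ :
      ∃ j0 ∈ Finset.Icc 0 (L - p), ∀ j ∈ Finset.Icc 0 (L - p),
        ((D:ℝ) < p * √2 → X (i + j) ≤ X (i + j0)) ∧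
        ((p:ℝ) * √2 < D → X (i + j0) ≤ X (i + j)) := by
    rcases lt_or_gt_of_ne hDne with hh | hh
    · obtain ⟨j0, hm, hopt⟩ := Finset.exists_max_image (Finset.Icc 0 (L - p))
        (fun j => X (i + j)) ⟨0, by simp⟩
      exact ⟨j0, hm, fun j hj => ⟨fun _ => hopt j hj, fun h => absurd h (by linarith)⟩⟩
    · obtain ⟨j0, hm, hopt⟩ := Finset.exists_min_image (Finset.Icc 0 (L - p))
        (fun j => X (i + j)) ⟨0, by simp⟩
      exact ⟨j0, hm, fun j hj => ⟨fun h => absurd h (by linarith), fun _ => hopt j hj⟩⟩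
  have hj0le : j0 ≤ L - p := by simpa using hj0mem
  -- step 1 : j0 + p > L - p
  have hstep1 : ¬ (j0 + p ≤ L - p) := by
    intro hcontra
    have hsh := hshift j0 (by omega)
    have hsh2 := hshift (j0 + p) (by omega)
    have hidx : i + (j0 + p) = i + j0 + p := by ring
    have hmem2 : j0 + p ∈ Finset.Icc 0 (L - p) := by simp; omega
    rcases lt_or_gt_of_ne hDne with hh | hh
    · -- θ = p√2 - D > 0, maximum argument
      have := (hj0opt (j0 + p) hmem2).1 hh
      rw [hidx] at this
      rw [hsh] at this
      linarith
    · have := (hj0opt (j0 + p) hmem2).2 hh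
      rw [hidx] at this
      rw [hsh] at this
      linarith
  -- step 2 : j0 < cn
  have hstep2 : ¬ (cn ≤ j0) := by
    intro hcontra
    have hmem2 : j0 - cn ∈ Finset.Icc 0 (L - p) := by simp; omega
    have hcast : ((i + (j0 - cn) : ℕ) : ℝ) = (i:ℝ) + j0 - cn := by
      push_cast [Nat.cast_sub hcontra]; ring
    have hXj0 := X_def (i + j0)
    have hX0 := X_pos (i + j0)
    have hX1 := X_lt_one (i + j0)
    have hcR : ((cn:ℕ):ℝ) = (c:ℝ) := by exact_mod_cast congrArg (Int.cast : ℤ → ℝ) hcnc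
    have hDR : (D:ℝ) = 2 * c := by exact_mod_cast congrArg (Int.cast : ℤ → ℝ) hc
    rcases lt_or_gt_of_ne hDne with hh | hh
    · -- low case: X t1 = X (i+j0) + θ√2/2 bigger
      set θ : ℝ := (p:ℝ) * √2 - D with hθ
      have hθ0 : 0 < θ := by simp only [hθ]; linarith
      have hθ1 : θ < 1 := by simp only [hθ]; linarith
      have hXlt : X (i + j0) < 1 - θ := by
        have hsh := hshift j0 (by omega)
        have := X_lt_one (i + j0 + p)
        rw [hsh] at this
        simp only [hθ]; linarith
      have hhalf : (0:ℝ) < √2/2 := by nlinarith [sqrt2_gt]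
      have hhalf1 : √2/2 < 1 := by nlinarith [sqrt2_lt]
      have hm1 : (0:ℝ) < θ * (√2/2) := mul_pos hθ0 hhalf
      have hm2 : θ * (√2/2) < θ * 1 := by exact mul_lt_mul_of_pos_left hhalf1 hθ0
      have hval : ((i + (j0 - cn) : ℕ):ℝ) * √2 + √2 =
          ((B (i + j0) - p : ℤ) : ℝ) + (X (i + j0) + θ * (√2/2)) := by
        rw [hcast]
        push_cast
        rw [hXj0]
        simp only [hθ]
        push_cast [hDR]
        linear_combination (-(p:ℝ)/2) * sqrt2_sq - √2 * hcR
      have hbx := BX_eval (t := i + (j0 - cn)) (z := B (i + j0) - p)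
        (y := X (i + j0) + θ * (√2/2)) (by rw [← hval]; ring)
        (by linarith) (by linarith)
      have := (hj0opt (j0 - cn) hmem2).1 hh
      rw [hbx.2] at this
      nlinarith [sqrt2_gt]
    · -- high case: X t1 = X (i+j0) - ε√2/2 smaller
      set ε : ℝ := (D:ℝ) - p * √2 with hε
      have hε0 : 0 < ε := by simp only [hε]; linarith
      have hε1 : ε < 1 := by simp only [hε]; linarith
      have hXge : ε < X (i + j0) := by
        have hsh := hshift j0 (by omega)
        have := X_pos (i + j0 + p)
        rw [hsh] at this
        simp only [hε]; linarith
      have hhalf : (0:ℝ) < √2/2 := by nlinarith [sqrt2_gt]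
      have hhalf1 : √2/2 < 1 := by nlinarith [sqrt2_lt]
      have hm1 : (0:ℝ) < ε * (√2/2) := mul_pos hε0 hhalf
      have hm2 : ε * (√2/2) < ε * 1 := by exact mul_lt_mul_of_pos_left hhalf1 hε0
      have hval : ((i + (j0 - cn) : ℕ):ℝ) * √2 + √2 =
          ((B (i + j0) - p : ℤ) : ℝ) + (X (i + j0) - ε * (√2/2)) := by
        rw [hcast]
        push_cast
        rw [hXj0]
        simp only [hε]
        push_cast [hDR]
        linear_combination (-(p:ℝ)/2) * sqrt2_sq - √2 * hcR
      have hbx := BX_eval (t := i + (j0 - cn)) (z := B (i + j0) - p)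
        (y := X (i + j0) - ε * (√2/2)) (by rw [← hval]; ring)
        (by linarith) (by linarith)
      have := (hj0opt (j0 - cn) hmem2).2 hh
      rw [hbx.2] at this
      nlinarith [sqrt2_gt]
  omega


lemma expSet_le {e : ℝ} (he : e ∈ expSet x3) : e ≤ 2 + √2/2 := by
  obtain ⟨u, p, hf, hne, hper, he⟩ := he
  have hub := upper_bound hf hper
  have hp0R : (0:ℝ) < p := by exact_mod_cast hper.1
  rw [he, div_le_iff₀ hp0R]
  exact hub

lemma one_mem_expSet : (1:ℝ) ∈ expSet x3 := by
  refine ⟨[x3 0], 1, ⟨0, ?_⟩, by simp, ⟨by norm_num, ?_⟩, by simp⟩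
  · simp [OccursAt, List.range_succ]
  · intro i hi
    simp at hi

end
end CE

namespace CE2

lemma prefix_period {z y : List ℕ} (h : z <+: y ++ z) :
    ∀ j, j + y.length < z.length → z.getD j 0 = z.getD (j + y.length) 0 := by
  intro j hj
  obtain ⟨t, ht⟩ := h
  have h1 : z.getD (j + y.length) 0 = (z ++ t).getD (j + y.length) 0 := by
    rw [List.getD_append _ _ _ _ hj]
  rw [ht] at h1
  rw [h1, List.getD_append_right]
  · simp [Nat.add_sub_cancel]
  · omega

-- take/append facts
example (y z : List ℕ) (m : ℕ) : (y ++ z).take (y.length + m) = y ++ z.take m := by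
  simp [List.take_append]

example (y z z' : List ℕ) (m : ℕ) (h : m ≤ y.length) : (y ++ z).take m = (y ++ z').take m := by
  simp [List.take_append, Nat.sub_eq_zero_of_le h]

lemma sum_getD (l : List ℕ) :
    ((List.range l.length).map (fun j => l.getD j 0)).sum = l.sum := by
  induction l using List.reverseRecOn with
  | nil => simp
  | append_singleton l x ih =>
    simp only [List.length_append, List.length_singleton, List.range_succ, List.map_append,
      List.map_cons, List.sum_append]
    have h1 : List.map (fun j => (l ++ [x]).getD j 0) (List.range l.length)
        = List.map (fun j => l.getD j 0) (List.range l.length) := by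
      apply List.map_congr_left
      intro j hj
      exact List.getD_append _ _ _ _ (List.mem_range.mp hj)
    have h2 : (l ++ [x]).getD l.length 0 = x := by
      rw [List.getD_append_right _ _ _ _ le_rfl]
      simp
    rw [h1, h2, ih]
    simp

lemma sum_add_count (l : List ℕ) (h : ∀ x ∈ l, x ≤ 1) : l.sum + l.count 0 = l.length := by
  induction l with
  | nil => simp
  | cons x t ih =>
    have hx := h x (by simp)
    have ht := ih (fun y hy => h y (by simp [hy]))
    interval_cases x <;> simp [List.count_cons] <;> omega

end CE2

namespace Wl

variable (a b : List ℕ)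

local notation "A" => a.length
local notation "Bq" => b.length
local notation "p" => a.length + b.length
local notation "Lf" => 2 * (a.length + b.length) + a.length - 2

lemma getD_prefix {z y : List ℕ} (h : z <+: y) {j : ℕ} (hj : j < z.length) :
    y.getD j 0 = z.getD j 0 := by
  obtain ⟨t, ht⟩ := h
  rw [← ht, List.getD_append _ _ _ _ hj]

lemma take_of_prefix {z y : List ℕ} (h : z <+: y) {m : ℕ} (hm : m ≤ z.length) :
    y.take m = z.take m := by
  obtain ⟨t, ht⟩ := h
  rw [← ht, List.take_append, Nat.sub_eq_zero_of_le hm]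
  simp

lemma take_append_cancel {s t : List ℕ} (y : List ℕ) {m : ℕ} (h : s.take m = t.take m) :
    (y ++ s).take (y.length + m) = (y ++ t).take (y.length + m) := by
  simp only [List.take_append]
  rw [show y.length + m - y.length = m from by omega, h]

lemma take_eq_of_le {y : List ℕ} (z : List ℕ) {m : ℕ} (h : m ≤ y.length) :
    (y ++ z).take m = y.take m := by
  simp [List.take_append, Nat.sub_eq_zero_of_le h]

def w : List ℕ := a ++ (b ++ (a ++ (a ++ (b ++ a))))
def W3 : List ℕ := a ++ (b ++ (a ++ (b ++ (a ++ (b ++ a)))))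
def W4 : List ℕ := a ++ (b ++ W3 a b)

variable (hab : (a ++ b).take (a.length + b.length - 2) = (b ++ a).take (a.length + b.length - 2))
  (ha2 : 2 ≤ a.length) (hb1 : 1 ≤ b.length)

include hab ha2 hb1 in
lemma w_take : (w a b).take Lf = (W3 a b).take Lf := by
  have inner : (a ++ (b ++ a)).take (p - 2) = (b ++ (a ++ (b ++ a))).take (p - 2) := by
    have l1 : (a ++ (b ++ a)).take (p - 2) = (a ++ b).take (p - 2) := by
      rw [← List.append_assoc]
      exact take_eq_of_le a (by simp only [List.length_append]; omega)
    have l2 : (b ++ (a ++ (b ++ a))).take (p - 2) = (b ++ a).take (p - 2) := by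
      rw [← List.append_assoc]
      exact take_eq_of_le (b ++ a) (by simp only [List.length_append]; omega)
    rw [l1, l2, hab]
  have mid : (a ++ (a ++ (b ++ a))).take (A + (p - 2)) =
      (a ++ (b ++ (a ++ (b ++ a)))).take (A + (p - 2)) := by
    have := take_append_cancel a inner
    simpa using this
  have outer := take_append_cancel (a ++ b) mid
  rw [show w a b = (a ++ b) ++ (a ++ (a ++ (b ++ a))) from by simp [w, List.append_assoc],
    show W3 a b = (a ++ b) ++ (a ++ (b ++ (a ++ (b ++ a)))) from by simp [W3, List.append_assoc],
    show Lf = (a ++ b).length + (A + (p - 2)) from by simp only [List.length_append]; omega]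
  exact outer

include hab ha2 hb1 in
lemma v_period : ∀ j, j + p < Lf →
    (w a b).getD j 0 = (w a b).getD (j + p) 0 := by
  intro j hj
  have hlenW3 : (W3 a b).length = 3*p + A := by simp [W3]; ring
  have hW3W4 : W3 a b <+: W4 a b := ⟨b ++ a, by simp [W3, W4, List.append_assoc]⟩
  have hvW4 : (W3 a b).take Lf = (W4 a b).take Lf :=
    (take_of_prefix hW3W4 (by omega)).symm
  have habv : (a ++ b) ++ (W3 a b).take Lf = (W4 a b).take (p + Lf) := by
    rw [show W4 a b = (a ++ b) ++ W3 a b from by simp [W4, List.append_assoc],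
      List.take_append,
      show p + Lf - (a ++ b).length = Lf from by simp,
      List.take_of_length_le (by simp : (a ++ b).length ≤ p + Lf)]
  have hpref : (W3 a b).take Lf <+: (a ++ b) ++ (W3 a b).take Lf := by
    rw [habv, hvW4, show (W4 a b).take Lf = ((W4 a b).take (p + Lf)).take Lf from by
      rw [List.take_take, min_eq_left (by omega)]]
    exact List.take_prefix _ _
  have hvlen : ((W3 a b).take Lf).length = Lf := by
    simp only [List.length_take, hlenW3]
    omega
  have hper := CE2.prefix_period hpref j
  rw [List.length_append, hvlen] at hper
  have hper2 := hper (by omega)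
  have hwv : ∀ m, m < Lf → (w a b).getD m 0 = ((W3 a b).take Lf).getD m 0 := by
    intro m hm
    rw [← w_take a b hab ha2 hb1]
    exact getD_prefix (List.take_prefix _ _)
      (by simp only [List.length_take, List.length_append, w]; omega)
  rw [hwv j (by omega), hwv (j+p) (by omega)]
  exact hper2

include ha2 hb1 in
lemma w_prefix_p : ∀ j, j < p → (w a b).getD j 0 = (a ++ b).getD j 0 := by
  intro j hj
  rw [show w a b = (a ++ b) ++ (a ++ (a ++ (b ++ a))) from by simp [w, List.append_assoc]]
  exact List.getD_append _ _ _ _ (by simp only [List.length_append]; omega)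

end Wl




namespace CE
noncomputable section
set_option linter.unusedSectionVars false
set_option maxHeartbeats 1000000

lemma std_fpre (k : ℕ) : stdWord d2 k = fpre f (phi^[k] 1) :=
  std_eq_fpre f phi hf0x f_le_one phi_zero phi_succ f_phi f_phi1 f_phi2 k

def qq (k : ℕ) : ℕ := (stdWord d2 k).length

lemma qq_iter (k : ℕ) : qq k = phi^[k] 1 := by
  rw [qq, std_fpre k]
  simp [fpre]

lemma qq_ge (k : ℕ) : k + 1 ≤ qq k := by
  rw [qq_iter]
  exact iter_ge phi hgrow_phi k

lemma qq_zero : qq 0 = 1 := by simp [qq, std_zero]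
lemma qq_one : qq 1 = 2 := by simp [qq, std_one]
lemma qq_rec (k : ℕ) : qq (k+2) = 2 * qq (k+1) + qq k := by
  simp [qq, std_two]
  ring

lemma qq_double (k : ℕ) : 2 * qq k ≤ qq (k+1) := by
  cases k with
  | zero => rw [qq_zero, qq_one]
  | succ k =>
    rw [qq_rec]
    have := qq_ge k
    omega

lemma std_getD {k n : ℕ} (h : n < qq k) : (stdWord d2 k).getD n 0 = f n := by
  rw [std_fpre k]
  exact fpre_getD f (by rw [qq_iter] at h; exact h)

lemma std_mem_le_one {k : ℕ} {x : ℕ} (h : x ∈ stdWord d2 k) : x ≤ 1 := by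
  rw [std_fpre k] at h
  simp only [fpre, List.mem_map] at h
  obtain ⟨j, _, hj⟩ := h
  rw [← hj]
  exact f_le_one j

lemma count0_odd : ∀ k, (stdWord d2 k).count 0 % 2 = 1 := by
  apply two_step
  · rw [std_zero]; rfl
  · rw [std_one]; rfl
  · intro k ih1 ih2
    rw [std_two, List.count_append, List.count_append]
    omega

lemma stdswap : ∀ k, (stdWord d2 (k+1) ++ stdWord d2 k).take (qq (k+1) + qq k - 2)
    = (stdWord d2 k ++ stdWord d2 (k+1)).take (qq (k+1) + qq k - 2) := by
  intro k
  induction k with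
  | zero =>
    rw [std_zero, std_one, qq_zero, qq_one]
    rfl
  | succ k ih =>
    have e1 : stdWord d2 (k+2) ++ stdWord d2 (k+1)
        = (stdWord d2 (k+1) ++ stdWord d2 (k+1)) ++ (stdWord d2 k ++ stdWord d2 (k+1)) := by
      rw [std_two]
      simp [List.append_assoc]
    have e2 : stdWord d2 (k+1) ++ stdWord d2 (k+2)
        = (stdWord d2 (k+1) ++ stdWord d2 (k+1)) ++ (stdWord d2 (k+1) ++ stdWord d2 k) := by
      rw [std_two]
      simp [List.append_assoc]
    have elen : qq (k+2) + qq (k+1) - 2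
        = (stdWord d2 (k+1) ++ stdWord d2 (k+1)).length + (qq (k+1) + qq k - 2) := by
      have h1 := qq_ge k
      have h2 := qq_ge (k+1)
      rw [qq_rec]
      simp only [List.length_append]
      show _ = qq (k+1) + qq (k+1) + _
      omega
    rw [e1, e2, elen]
    exact Wl.take_append_cancel _ ih.symm

lemma Bdiff (t : ℕ) : ∀ m, B (t + m) = B t + m + ((List.range m).map (fun j => f (t+j))).sum := by
  intro m
  induction m with
  | zero => simp
  | succ m ih =>
    have hb : B (t + m + 1) = B (t + m) + 1 + f (t + m) := B_succ (t + m)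
    rw [show t + (m+1) = t + m + 1 from rfl, hb, ih, List.range_succ]
    push_cast
    simp [List.sum_append]
    ring

end
end CE

namespace CE
noncomputable section
set_option linter.unusedSectionVars false
set_option maxHeartbeats 1000000

lemma letter_eq_rev {t t' : ℕ} (hf : f t = f t') (hB : (B t' - B t) % 2 = 0) :
    x3 t = x3 t' := by
  have h1 := countBelow_cast t
  have h2 := countBelow_cast t'
  have h3 := f_le_one t
  rw [x3_eq, x3_eq, ← hf]
  rcases Nat.le_one_iff_eq_zero_or_eq_one.mp h3 with ht | ht <;> simp only [ht] <;> simp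
  omega

/-- The exponent sequence: member of expSet for each k. -/
lemma exists_factor (k : ℕ) :
    ((2 * (qq (k+1) + qq k) + qq (k+1) - 2 : ℕ) : ℝ) / ((qq (k+1) + qq k : ℕ) : ℝ)
      ∈ expSet x3 := by
  set a : List ℕ := stdWord d2 (k+1) with ha
  set b : List ℕ := stdWord d2 k with hb
  have hla : a.length = qq (k+1) := rfl
  have hlb : b.length = qq k := rfl
  have ha2 : 2 ≤ a.length := by rw [hla]; have := qq_ge (k+1); omega
  have hb1 : 1 ≤ b.length := by rw [hlb]; have := qq_ge k; omega
  set A := qq (k+1) with hA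
  set Bq := qq k with hBq
  set p := A + Bq with hp
  set L := 2 * p + A - 2 with hL
  have hab : (a ++ b).take (a.length + b.length - 2) = (b ++ a).take (a.length + b.length - 2) := by
    rw [hla, hlb]
    exact stdswap k
  -- letters of the window
  have hS3 : stdWord d2 (k+3) = a ++ Wl.w a b := by
    rw [show (k+3) = (k+1)+2 from rfl, std_two, show (k+2) = k+2 from rfl, std_two]
    simp [Wl.w, ← ha, ← hb, List.append_assoc]
  have hq3 : qq (k+3) = A + (2 * p + 2 * A) := by
    rw [show (k+3) = (k+1)+2 from rfl, qq_rec, qq_rec]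
    omega
  have hwlen : (Wl.w a b).length = 2 * p + 2 * A := by
    simp [Wl.w, hla, hlb]
    omega
  have hfw : ∀ j, j < 2 * p + 2 * A → f (A + j) = (Wl.w a b).getD j 0 := by
    intro j hj
    have h1 : A + j < qq (k+3) := by omega
    rw [← std_getD h1, hS3]
    rw [List.getD_append_right _ _ _ _ (by rw [hla]; omega)]
    congr 1
    rw [hla]
    omega
  have hLw : L ≤ 2 * p + 2 * A := by omega
  -- f-periodicity on the window
  have hfper : ∀ j, j + p < L → f (A + j) = f (A + j + p) := by
    intro j hj
    have hv := Wl.v_period a b hab ha2 hb1 j (by rw [hla, hlb]; omega)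
    rw [hfw j (by omega), show A + j + p = A + (j + p) from by omega, hfw (j+p) (by omega)]
    exact hv
  -- first-period letters
  have hfpre : ∀ j, j < p → f (A + j) = (a ++ b).getD j 0 := by
    intro j hj
    rw [hfw j (by omega)]
    exact Wl.w_prefix_p a b ha2 hb1 j (by rw [hla, hlb]; omega)
  -- D0 and parity
  set D0 : ℤ := B (A + p) - B A with hD0
  have hD0sum : D0 = p + ((a ++ b).sum : ℤ) := by
    rw [hD0, Bdiff A p]
    have : (List.range p).map (fun j => f (A + j)) = (List.range p).map (fun j => (a++b).getD j 0) := by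
      apply List.map_congr_left
      intro j hj
      exact hfpre j (List.mem_range.mp hj)
    rw [this]
    have hlen : (a ++ b).length = p := by simp [hla, hlb, hp]
    have := CE2.sum_getD (a ++ b)
    rw [hlen] at this
    rw [this]
    push_cast
    ring
  have hD0even : D0 % 2 = 0 := by
    have hcount : (a ++ b).sum + (a ++ b).count 0 = (a ++ b).length := by
      apply CE2.sum_add_count
      intro x hx
      rcases List.mem_append.mp hx with h | h
      · exact std_mem_le_one h
      · exact std_mem_le_one h
    have hodd1 : a.count 0 % 2 = 1 := count0_odd (k+1)
    have hodd2 : b.count 0 % 2 = 1 := count0_odd k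
    rw [List.count_append] at hcount
    have hlen : (a ++ b).length = p := by simp [hla, hlb, hp]
    rw [hlen] at hcount
    omega
  -- D constancy
  have hDconst : ∀ j, j + p ≤ L → B (A + j + p) - B (A + j) = D0 := by
    intro j
    induction j with
    | zero => intro _; simp [hD0]
    | succ j ih =>
      intro hj
      have hih := ih (by omega)
      have e1 := B_succ (A + j)
      have e2 := B_succ (A + j + p)
      have e3 := hfper j (by omega)
      rw [show A + (j+1) + p = (A + j + p) + 1 from by ring, show A + (j+1) = (A+j)+1 from by ring]
      omega
  -- x3-periodicity
  have hx3per : ∀ j, j + p < L → x3 (A + j) = x3 (A + j + p) := by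
    intro j hj
    apply letter_eq_rev (hfper j hj)
    have := hDconst j (by omega)
    omega
  -- assemble the factor
  refine ⟨(List.range L).map (fun j => x3 (A + j)), p, ⟨A, ?_⟩, ?_, ⟨by omega, ?_⟩, ?_⟩
  · simp [OccursAt]
  · intro hcon
    have hlen := congrArg List.length hcon
    simp only [List.length_map, List.length_range, List.length_nil] at hlen
    omega
  · intro j hj
    simp only [List.length_map, List.length_range] at hj
    have hg : ∀ m, m < L → (List.map (fun j => x3 (A + j)) (List.range L))[m]?
        = some (x3 (A + m)) := by
      intro m hm
      simp [List.getElem?_map, List.getElem?_range, hm]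
    rw [hg j (by omega), hg (j+p) (by omega)]
    rw [show A + (j + p) = A + j + p from by ring]
    exact congrArg some (hx3per j hj)
  · simp only [List.length_map, List.length_range]

end
end CE

namespace CE
noncomputable section
set_option linter.unusedSectionVars false
set_option maxHeartbeats 1000000

def eseq (k : ℕ) : ℝ :=
  ((2 * (qq (k+1) + qq k) + qq (k+1) - 2 : ℕ) : ℝ) / ((qq (k+1) + qq k : ℕ) : ℝ)

lemma eseq_mem (k : ℕ) : eseq k ∈ expSet x3 := exists_factor k

lemma qq_posR (k : ℕ) : (0:ℝ) < qq k := by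
  have := qq_ge k
  have : 0 < qq k := by omega
  exact_mod_cast this

def rr (k : ℕ) : ℝ := (qq (k+1) : ℝ) / qq k

lemma rr_ge_two (k : ℕ) : 2 ≤ rr k := by
  rw [rr, le_div_iff₀ (qq_posR k)]
  have := qq_double k
  exact_mod_cast this

lemma theta_gt : 2 ≤ 1 + √2 := by nlinarith [sqrt2_gt]

lemma rr_succ (k : ℕ) : rr (k+1) = 2 + 1 / rr k := by
  have h1 := qq_posR k
  have h2 := qq_posR (k+1)
  have hrec : ((qq (k+2) : ℕ) : ℝ) = 2 * qq (k+1) + qq k := by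
    exact_mod_cast congrArg (Nat.cast : ℕ → ℝ) (qq_rec k)
  rw [rr, rr, hrec]
  field_simp

lemma rr_err : ∀ k, |rr k - (1 + √2)| ≤ (1/4 : ℝ)^k := by
  intro k
  induction k with
  | zero =>
    have h0 : rr 0 = 2 := by
      rw [rr, qq_one, qq_zero]
      norm_num
    rw [h0]
    rw [abs_le]
    constructor <;> nlinarith [sqrt2_gt, sqrt2_lt]
  | succ k ih =>
    have h1 := rr_ge_two k
    have h2 := qq_posR k
    have hθ : (0:ℝ) < 1 + √2 := by nlinarith [sqrt2_gt]
    have heq : rr (k+1) - (1 + √2) = ((1 + √2) - rr k) / (rr k * (1 + √2)) := by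
      rw [rr_succ]
      have hr0 : rr k ≠ 0 := by linarith
      have hθ0 : (1 + √2) ≠ 0 := by linarith
      field_simp
      linear_combination (-(rr k)) * sqrt2_sq
    rw [heq, abs_div, abs_mul]
    have h4 : (4:ℝ) ≤ |rr k| * |1 + √2| := by
      rw [abs_of_pos (by linarith : (0:ℝ) < rr k), abs_of_pos hθ]
      nlinarith [sqrt2_gt]
    have h5 : |(1 + √2) - rr k| = |rr k - (1 + √2)| := abs_sub_comm _ _
    rw [h5]
    calc |rr k - (1 + √2)| / (|rr k| * |1 + √2|) ≤ (1/4:ℝ)^k / 4 := by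
          apply div_le_div₀ (by positivity) ih (by norm_num) h4
      _ = (1/4:ℝ)^(k+1) := by ring
  
lemma tendsto_rr : Filter.Tendsto rr Filter.atTop (nhds (1 + √2)) := by
  have hp : Filter.Tendsto (fun k : ℕ => (1/4 : ℝ)^k) Filter.atTop (nhds 0) := by
    apply tendsto_pow_atTop_nhds_zero_of_lt_one <;> norm_num
  have hlow : Filter.Tendsto (fun k : ℕ => (1 + √2) - (1/4:ℝ)^k) Filter.atTop (nhds (1 + √2)) := by
    simpa using (tendsto_const_nhds.sub hp)
  have hhigh : Filter.Tendsto (fun k : ℕ => (1 + √2) + (1/4:ℝ)^k) Filter.atTop (nhds (1 + √2)) := by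
    simpa using (tendsto_const_nhds.add hp)
  apply tendsto_of_tendsto_of_tendsto_of_le_of_le hlow hhigh
  · intro k
    have := abs_le.mp (rr_err k)
    linarith [this.1]
  · intro k
    have := abs_le.mp (rr_err k)
    linarith [this.2]

lemma tendsto_inv_qq : Filter.Tendsto (fun k : ℕ => 2 / (qq k : ℝ)) Filter.atTop (nhds 0) := by
  have hbig : Filter.Tendsto (fun k : ℕ => (qq k : ℝ)) Filter.atTop Filter.atTop := by
    apply Filter.tendsto_atTop_mono (fun k => ?_) tendsto_natCast_atTop_atTop
    have := qq_ge k
    exact_mod_cast Nat.le_of_lt_succ (by omega)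
  exact Filter.Tendsto.div_atTop tendsto_const_nhds hbig

lemma eseq_eq (k : ℕ) : eseq k = (3 * rr k + 2 - 2/(qq k : ℝ)) / (rr k + 1) := by
  have h1 := qq_posR k
  have h2 := qq_posR (k+1)
  have hsub : (2:ℕ) ≤ 2 * (qq (k+1) + qq k) + qq (k+1) := by
    have := qq_ge k; have := qq_ge (k+1); omega
  rw [eseq, rr]
  push_cast [Nat.cast_sub hsub]
  have hy : (qq k : ℝ) ≠ 0 := ne_of_gt h1
  have hxy : ((qq (k+1)) : ℝ) + (qq k) ≠ 0 := by positivity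
  field_simp
  ring

lemma tendsto_eseq : Filter.Tendsto eseq Filter.atTop (nhds (2 + √2/2)) := by
  have hθ1 : (1 + √2) + 1 ≠ 0 := by nlinarith [sqrt2_gt]
  have hnum : Filter.Tendsto (fun k => 3 * rr k + 2 - 2/(qq k : ℝ)) Filter.atTop
      (nhds (3 * (1 + √2) + 2 - 0)) :=
    (((tendsto_rr.const_mul 3).add_const 2).sub tendsto_inv_qq)
  have hden : Filter.Tendsto (fun k => rr k + 1) Filter.atTop (nhds ((1 + √2) + 1)) :=
    tendsto_rr.add_const 1
  have := hnum.div hden hθ1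
  have hval : (3 * (1 + √2) + 2 - 0) / ((1 + √2) + 1) = 2 + √2/2 := by
    rw [div_eq_iff hθ1]
    nlinarith [sqrt2_sq]
  rw [hval] at this
  exact this.congr (fun k => (eseq_eq k).symm)

end
end CE

theorem critical_exponent_x3 :
    sSup (expSet x3) = 2 + Real.sqrt 2 / 2 := by
  have hbdd : BddAbove (expSet x3) := ⟨2 + Real.sqrt 2/2, fun e he => CE.expSet_le he⟩
  apply le_antisymm
  · exact csSup_le ⟨1, CE.one_mem_expSet⟩ (fun e he => CE.expSet_le he)
  · apply le_of_tendsto CE.tendsto_eseq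
    filter_upwards with k
    exact le_csSup hbdd (CE.eseq_mem k)
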